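/- arXiv:1307.0215 — 4 statements merged into one kernel-verified Lean document; each statement's English description precedes it below -/
import Mathlib

section
/- Let A ∈ O₂(4) be a matrix that either commutes or anticommutes with J₁ (viewed as a matrix), and denote by r₁, r₂, r₃, r₄ ∈ ℝ⁴ the rows of A. Then there exist ε ∈ {−1, 1} and ξ ∈ ℝ such that r₂ = ε·J₁r₁, r₃ = cos ξ·J₂r₁ + sin ξ·J₃r₁, and r₄ = ε·(sin ξ·J₂r₁ − cos ξ·J₃r₁). -/
noncomputable section

/-- The complex structure J₁ of ℝ⁴. -/
def J1 (v : Fin 4 → ℝ) : Fin 4 → ℝ := ![-v 1, v 0, -v 3, v 2]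

/-- The product structure J₂ of ℝ⁴. -/
def J2 (v : Fin 4 → ℝ) : Fin 4 → ℝ := ![v 3, v 2, v 1, v 0]

/-- The product structure J₃ of ℝ⁴. -/
def J3 (v : Fin 4 → ℝ) : Fin 4 → ℝ := ![v 2, -v 3, v 0, -v 1]

/-- The matrix of the complex structure J₁. -/
def J1mat : Matrix (Fin 4) (Fin 4) ℝ := !![0,-1,0,0; 1,0,0,0; 0,0,0,-1; 0,0,1,0]

/-- The matrix ε = diag(1,1,−1,−1), defining the inner product of signature (2,2). -/
def eps : Matrix (Fin 4) (Fin 4) ℝ := !![1,0,0,0; 0,1,0,0; 0,0,-1,0; 0,0,0,-1]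

set_option maxHeartbeats 1000000

theorem rows_of_indefinite_orthogonal_matrix (A : Matrix (Fin 4) (Fin 4) ℝ)
    (hA : A.transpose * eps * A = eps)
    (hcomm : A * J1mat = J1mat * A ∨ A * J1mat = -(J1mat * A)) :
    ∃ e : ℝ, (e = -1 ∨ e = 1) ∧ ∃ ξ : ℝ,
      A 1 = e • J1 (A 0) ∧
      A 2 = Real.cos ξ • J2 (A 0) + Real.sin ξ • J3 (A 0) ∧
      A 3 = e • (Real.sin ξ • J2 (A 0) - Real.cos ξ • J3 (A 0)) := by
  -- rows are ε-orthonormal : A * eps * Aᵀ = eps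
  have hee : eps * eps = 1 := by
    ext i j; fin_cases i <;> fin_cases j <;>
      simp [eps, Matrix.mul_apply, Fin.sum_univ_four, Matrix.one_apply,
        Matrix.vecHead, Matrix.vecTail]
  have hE : A * eps * A.transpose = eps := by
    have h1 : (eps * A.transpose * eps) * A = 1 := by
      have h : eps * A.transpose * eps * A = eps * (A.transpose * eps * A) := by
        simp [Matrix.mul_assoc]
      rw [h, hA, hee]
    have h2 : A * (eps * A.transpose * eps) = 1 := mul_eq_one_comm.mp h1
    have h3 : A * eps * A.transpose * eps = 1 := by
      simpa [Matrix.mul_assoc] using h2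
    have h4 := congrArg (· * eps) h3
    simpa [Matrix.mul_assoc, hee] using h4
  -- scalar inner product relations on rows
  have g00 := Matrix.ext_iff.mpr hE 0 0
  have g02 := Matrix.ext_iff.mpr hE 0 2
  have g12 := Matrix.ext_iff.mpr hE 1 2
  have g22 := Matrix.ext_iff.mpr hE 2 2
  norm_num [eps, Matrix.mul_apply, Fin.sum_univ_four, Matrix.vecHead,
    Matrix.vecTail, Matrix.cons_val_two, Matrix.cons_val_three] at g00 g02 g12 g22
  -- from (anti)commutation: get e and relations for rows 1 and 3
  obtain ⟨e, he, h10, h11, h12, h13, h30, h31, h32, h33⟩ :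
      ∃ e : ℝ, (e = -1 ∨ e = 1) ∧
        A 1 0 = -(e * A 0 1) ∧ A 1 1 = e * A 0 0 ∧
        A 1 2 = -(e * A 0 3) ∧ A 1 3 = e * A 0 2 ∧
        A 3 0 = -(e * A 2 1) ∧ A 3 1 = e * A 2 0 ∧
        A 3 2 = -(e * A 2 3) ∧ A 3 3 = e * A 2 2 := by
    rcases hcomm with h | h
    · refine ⟨1, Or.inr rfl, ?_, ?_, ?_, ?_, ?_, ?_, ?_, ?_⟩
      · have h' := Matrix.ext_iff.mpr h 1 1
        norm_num [J1mat, Matrix.mul_apply, Fin.sum_univ_four, Matrix.vecHead,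
          Matrix.vecTail, Matrix.cons_val_two, Matrix.cons_val_three] at h'
        linarith
      · have h' := Matrix.ext_iff.mpr h 1 0
        norm_num [J1mat, Matrix.mul_apply, Fin.sum_univ_four, Matrix.vecHead,
          Matrix.vecTail, Matrix.cons_val_two, Matrix.cons_val_three] at h'
        linarith
      · have h' := Matrix.ext_iff.mpr h 1 3
        norm_num [J1mat, Matrix.mul_apply, Fin.sum_univ_four, Matrix.vecHead,
          Matrix.vecTail, Matrix.cons_val_two, Matrix.cons_val_three] at h'
        linarith
      · have h' := Matrix.ext_iff.mpr h 1 2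
        norm_num [J1mat, Matrix.mul_apply, Fin.sum_univ_four, Matrix.vecHead,
          Matrix.vecTail, Matrix.cons_val_two, Matrix.cons_val_three] at h'
        linarith
      · have h' := Matrix.ext_iff.mpr h 3 1
        norm_num [J1mat, Matrix.mul_apply, Fin.sum_univ_four, Matrix.vecHead,
          Matrix.vecTail, Matrix.cons_val_two, Matrix.cons_val_three] at h'
        linarith
      · have h' := Matrix.ext_iff.mpr h 3 0
        norm_num [J1mat, Matrix.mul_apply, Fin.sum_univ_four, Matrix.vecHead,
          Matrix.vecTail, Matrix.cons_val_two, Matrix.cons_val_three] at h'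
        linarith
      · have h' := Matrix.ext_iff.mpr h 3 3
        norm_num [J1mat, Matrix.mul_apply, Fin.sum_univ_four, Matrix.vecHead,
          Matrix.vecTail, Matrix.cons_val_two, Matrix.cons_val_three] at h'
        linarith
      · have h' := Matrix.ext_iff.mpr h 3 2
        norm_num [J1mat, Matrix.mul_apply, Fin.sum_univ_four, Matrix.vecHead,
          Matrix.vecTail, Matrix.cons_val_two, Matrix.cons_val_three] at h'
        linarith
    · refine ⟨-1, Or.inl rfl, ?_, ?_, ?_, ?_, ?_, ?_, ?_, ?_⟩
      · have h' := Matrix.ext_iff.mpr h 1 1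
        norm_num [J1mat, Matrix.mul_apply, Fin.sum_univ_four, Matrix.vecHead,
          Matrix.vecTail, Matrix.neg_apply, Matrix.vecMul, dotProduct, Matrix.cons_val_two, Matrix.cons_val_three] at h' ⊢
        linarith
      · have h' := Matrix.ext_iff.mpr h 1 0
        norm_num [J1mat, Matrix.mul_apply, Fin.sum_univ_four, Matrix.vecHead,
          Matrix.vecTail, Matrix.neg_apply, Matrix.vecMul, dotProduct, Matrix.cons_val_two, Matrix.cons_val_three] at h' ⊢
        linarith
      · have h' := Matrix.ext_iff.mpr h 1 3
        norm_num [J1mat, Matrix.mul_apply, Fin.sum_univ_four, Matrix.vecHead,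
          Matrix.vecTail, Matrix.neg_apply, Matrix.vecMul, dotProduct, Matrix.cons_val_two, Matrix.cons_val_three] at h' ⊢
        linarith
      · have h' := Matrix.ext_iff.mpr h 1 2
        norm_num [J1mat, Matrix.mul_apply, Fin.sum_univ_four, Matrix.vecHead,
          Matrix.vecTail, Matrix.neg_apply, Matrix.vecMul, dotProduct, Matrix.cons_val_two, Matrix.cons_val_three] at h' ⊢
        linarith
      · have h' := Matrix.ext_iff.mpr h 3 1
        norm_num [J1mat, Matrix.mul_apply, Fin.sum_univ_four, Matrix.vecHead,
          Matrix.vecTail, Matrix.neg_apply, Matrix.vecMul, dotProduct, Matrix.cons_val_two, Matrix.cons_val_three] at h' ⊢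
        linarith
      · have h' := Matrix.ext_iff.mpr h 3 0
        norm_num [J1mat, Matrix.mul_apply, Fin.sum_univ_four, Matrix.vecHead,
          Matrix.vecTail, Matrix.neg_apply, Matrix.vecMul, dotProduct, Matrix.cons_val_two, Matrix.cons_val_three] at h' ⊢
        linarith
      · have h' := Matrix.ext_iff.mpr h 3 3
        norm_num [J1mat, Matrix.mul_apply, Fin.sum_univ_four, Matrix.vecHead,
          Matrix.vecTail, Matrix.neg_apply, Matrix.vecMul, dotProduct, Matrix.cons_val_two, Matrix.cons_val_three] at h' ⊢
        linarith
      · have h' := Matrix.ext_iff.mpr h 3 2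
        norm_num [J1mat, Matrix.mul_apply, Fin.sum_univ_four, Matrix.vecHead,
          Matrix.vecTail, Matrix.neg_apply, Matrix.vecMul, dotProduct, Matrix.cons_val_two, Matrix.cons_val_three] at h' ⊢
        linarith
  -- notation for row 0 and row 2 entries
  have hN : (A 0 0)*(A 0 0) + (A 0 1)*(A 0 1) - (A 0 2)*(A 0 2) - (A 0 3)*(A 0 3) = 1 := by linear_combination g00
  have hL1 : (A 0 0)*(A 2 0) + (A 0 1)*(A 2 1) - (A 0 2)*(A 2 2) - (A 0 3)*(A 2 3) = 0 := by linear_combination g02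
  have hW : (A 2 0)*(A 2 0) + (A 2 1)*(A 2 1) - (A 2 2)*(A 2 2) - (A 2 3)*(A 2 3) = -1 := by linear_combination g22
  have hL2 : -(A 0 1)*(A 2 0) + (A 0 0)*(A 2 1) + (A 0 3)*(A 2 2) - (A 0 2)*(A 2 3) = 0 := by
    rw [h10, h11, h12, h13] at g12
    rcases he with rfl | rfl
    · linear_combination -g12
    · linear_combination g12
  set c := -((A 2 0)*(A 0 3) + (A 2 1)*(A 0 2) - (A 2 2)*(A 0 1) - (A 2 3)*(A 0 0)) with hc
  set d := -((A 2 0)*(A 0 2) - (A 2 1)*(A 0 3) - (A 2 2)*(A 0 0) + (A 2 3)*(A 0 1)) with hd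
  have eq0 : (A 2 0) = c*(A 0 3) + d*(A 0 2) := by
    linear_combination (-(A 2 0)) * hN + (A 0 0) * hL1 + (-(A 0 1)) * hL2
  have eq1 : (A 2 1) = c*(A 0 2) - d*(A 0 3) := by
    linear_combination (-(A 2 1)) * hN + (A 0 1) * hL1 + (A 0 0) * hL2
  have eq2 : (A 2 2) = c*(A 0 1) + d*(A 0 0) := by
    linear_combination (-(A 2 2)) * hN + (A 0 2) * hL1 + (-(A 0 3)) * hL2
  have eq3 : (A 2 3) = c*(A 0 0) - d*(A 0 1) := by
    linear_combination (-(A 2 3)) * hN + (A 0 3) * hL1 + (A 0 2) * hL2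
  have hcd : c^2 + d^2 = 1 := by
    linear_combination ((A 0 0)*(A 2 0) + (A 0 1)*(A 2 1) - (A 0 2)*(A 2 2) - (A 0 3)*(A 2 3)) * hL1 +
      (-(A 0 1)*(A 2 0) + (A 0 0)*(A 2 1) + (A 0 3)*(A 2 2) - (A 0 2)*(A 2 3)) * hL2 +
      (-((A 0 0)*(A 0 0) + (A 0 1)*(A 0 1) - (A 0 2)*(A 0 2) - (A 0 3)*(A 0 3))) * hW + hN
  -- find the angle ξ
  obtain ⟨ξ, hcos, hsin⟩ : ∃ ξ : ℝ, Real.cos ξ = c ∧ Real.sin ξ = d := by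
    rcases le_or_gt 0 d with hdle | hdlt
    · refine ⟨Real.arccos c, Real.cos_arccos (by nlinarith) (by nlinarith), ?_⟩
      rw [Real.sin_arccos]
      have h1 : 1 - c^2 = d^2 := by linarith
      rw [h1, Real.sqrt_sq hdle]
    · refine ⟨-Real.arccos c, ?_, ?_⟩
      · rw [Real.cos_neg]
        exact Real.cos_arccos (by nlinarith) (by nlinarith)
      · rw [Real.sin_neg, Real.sin_arccos]
        have h1 : 1 - c^2 = d^2 := by linarith
        rw [h1, Real.sqrt_sq_eq_abs, abs_of_neg hdlt]
        ring
  refine ⟨e, he, ξ, ?_, ?_, ?_⟩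
  · funext j
    fin_cases j
    · show A 1 0 = (e • J1 (A 0)) 0
      simp only [Pi.smul_apply, smul_eq_mul, J1, Matrix.cons_val_zero]
      linear_combination h10
    · show A 1 1 = (e • J1 (A 0)) 1
      simp only [Pi.smul_apply, smul_eq_mul, J1, Matrix.cons_val_one, Matrix.head_cons, Matrix.cons_val_zero]
      linear_combination h11
    · show A 1 2 = (e • J1 (A 0)) 2
      simp only [Pi.smul_apply, smul_eq_mul, J1, Matrix.cons_val_two, Matrix.tail_cons,
        Matrix.head_cons]
      linear_combination h12
    · show A 1 3 = (e • J1 (A 0)) 3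
      simp only [Pi.smul_apply, smul_eq_mul, J1, Matrix.cons_val_three, Matrix.tail_cons,
        Matrix.head_cons]
      linear_combination h13
  · funext j
    fin_cases j
    · show A 2 0 = (Real.cos ξ • J2 (A 0) + Real.sin ξ • J3 (A 0)) 0
      simp only [Pi.add_apply, Pi.smul_apply, smul_eq_mul, J2, J3, Matrix.cons_val_zero]
      linear_combination eq0 - (A 0 3) * hcos - (A 0 2) * hsin
    · show A 2 1 = (Real.cos ξ • J2 (A 0) + Real.sin ξ • J3 (A 0)) 1
      simp only [Pi.add_apply, Pi.smul_apply, smul_eq_mul, J2, J3, Matrix.cons_val_one,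
        Matrix.head_cons, Matrix.cons_val_zero]
      linear_combination eq1 - (A 0 2) * hcos + (A 0 3) * hsin
    · show A 2 2 = (Real.cos ξ • J2 (A 0) + Real.sin ξ • J3 (A 0)) 2
      simp only [Pi.add_apply, Pi.smul_apply, smul_eq_mul, J2, J3, Matrix.cons_val_two,
        Matrix.tail_cons, Matrix.head_cons]
      linear_combination eq2 - (A 0 1) * hcos - (A 0 0) * hsin
    · show A 2 3 = (Real.cos ξ • J2 (A 0) + Real.sin ξ • J3 (A 0)) 3
      simp only [Pi.add_apply, Pi.smul_apply, smul_eq_mul, J2, J3, Matrix.cons_val_three,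
        Matrix.tail_cons, Matrix.head_cons]
      linear_combination eq3 - (A 0 0) * hcos + (A 0 1) * hsin
  · funext j
    fin_cases j
    · show A 3 0 = (e • (Real.sin ξ • J2 (A 0) - Real.cos ξ • J3 (A 0))) 0
      simp only [Pi.smul_apply, Pi.sub_apply, smul_eq_mul, J2, J3, Matrix.cons_val_zero]
      linear_combination h30 - e * eq1 + (e * (A 0 2)) * hcos - (e * (A 0 3)) * hsin
    · show A 3 1 = (e • (Real.sin ξ • J2 (A 0) - Real.cos ξ • J3 (A 0))) 1
      simp only [Pi.smul_apply, Pi.sub_apply, smul_eq_mul, J2, J3, Matrix.cons_val_one,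
        Matrix.head_cons, Matrix.cons_val_zero]
      linear_combination h31 + e * eq0 - (e * (A 0 3)) * hcos - (e * (A 0 2)) * hsin
    · show A 3 2 = (e • (Real.sin ξ • J2 (A 0) - Real.cos ξ • J3 (A 0))) 2
      simp only [Pi.smul_apply, Pi.sub_apply, smul_eq_mul, J2, J3, Matrix.cons_val_two,
        Matrix.tail_cons, Matrix.head_cons]
      linear_combination h32 - e * eq3 + (e * (A 0 0)) * hcos - (e * (A 0 1)) * hsin
    · show A 3 3 = (e • (Real.sin ξ • J2 (A 0) - Real.cos ξ • J3 (A 0))) 3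
      simp only [Pi.smul_apply, Pi.sub_apply, smul_eq_mul, J2, J3, Matrix.cons_val_three,
        Matrix.tail_cons, Matrix.head_cons]
      linear_combination h33 + e * eq2 - (e * (A 0 1)) * hcos - (e * (A 0 0)) * hsin
end
end

section
/- The Hopf map is constant along the circle fibers generated by the Hopf vector field: for every v ∈ ℝ⁴ and every t ∈ ℝ, ψ(cos t · v + sin t · J₁v) = ψ(v); consequently, for every v ∈ ℝ⁴ the Fréchet derivative of ψ at v applied to the vector J₁v is zero (i.e. the vector field X₁(v) = J₁v is vertical for ψ). -/
noncomputable section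

/-- The Hopf map in real coordinates. -/
def hopf (v : Fin 4 → ℝ) : Fin 3 → ℝ :=
  ![v 0 * v 2 + v 1 * v 3, v 1 * v 2 - v 0 * v 3, (v 0 ^ 2 + v 1 ^ 2 + v 2 ^ 2 + v 3 ^ 2) / 2]

lemma hopf_part1 : ∀ (v : Fin 4 → ℝ) (t : ℝ),
    hopf (Real.cos t • v + Real.sin t • J1 v) = hopf v := by
  intro v t
  have h := Real.sin_sq_add_cos_sq t
  funext i
  fin_cases i
  · simp [hopf, J1]; linear_combination (v 0 * v 2 + v 1 * v 3) * h
  · simp [hopf, J1]; linear_combination (v 1 * v 2 - v 0 * v 3) * h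
  · simp [hopf, J1]; linear_combination (v 0 ^ 2 + v 1 ^ 2 + v 2 ^ 2 + v 3 ^ 2) * h

lemma hopf_diff (v : Fin 4 → ℝ) : DifferentiableAt ℝ hopf v := by
  rw [show hopf = fun v => ![v 0 * v 2 + v 1 * v 3, v 1 * v 2 - v 0 * v 3,
      (v 0 ^ 2 + v 1 ^ 2 + v 2 ^ 2 + v 3 ^ 2) / 2] from rfl]
  apply differentiableAt_pi.2
  intro i
  fin_cases i <;> simp <;> fun_prop

lemma hopf_part2 (v : Fin 4 → ℝ) : fderiv ℝ hopf v (J1 v) = 0 := by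
  have hc : HasDerivAt (fun t : ℝ => Real.cos t • v + Real.sin t • J1 v) (J1 v) 0 := by
    have h1 : HasDerivAt (fun t : ℝ => Real.cos t • v) ((-Real.sin 0) • v) 0 :=
      (Real.hasDerivAt_cos 0).smul_const v
    have h2 : HasDerivAt (fun t : ℝ => Real.sin t • J1 v) (Real.cos 0 • J1 v) 0 :=
      (Real.hasDerivAt_sin 0).smul_const (J1 v)
    have h3 : HasDerivAt (fun t : ℝ => Real.cos t • v + Real.sin t • J1 v)
        ((-Real.sin 0) • v + Real.cos 0 • J1 v) 0 := h1.add h2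
    have e : (-Real.sin 0) • v + Real.cos 0 • J1 v = J1 v := by simp
    rw [e] at h3; exact h3
  have hcomp : HasDerivAt (fun t : ℝ => hopf (Real.cos t • v + Real.sin t • J1 v))
      (fderiv ℝ hopf (Real.cos 0 • v + Real.sin 0 • J1 v) (J1 v)) 0 :=
    (hopf_diff _).hasFDerivAt.comp_hasDerivAt 0 hc
  have hconst : HasDerivAt (fun t : ℝ => hopf (Real.cos t • v + Real.sin t • J1 v)) 0 0 := by
    have : (fun t : ℝ => hopf (Real.cos t • v + Real.sin t • J1 v)) = fun _ => hopf v := by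
      funext t; exact hopf_part1 v t
    rw [this]; exact hasDerivAt_const 0 _
  have key := hcomp.unique hconst
  simpa using key

theorem hopf_constant_along_fibers :
    (∀ (v : Fin 4 → ℝ) (t : ℝ), hopf (Real.cos t • v + Real.sin t • J1 v) = hopf v) ∧
    (∀ v : Fin 4 → ℝ, fderiv ℝ hopf v (J1 v) = 0) := by
  exact ⟨hopf_part1, hopf_part2⟩
end
end

section
/- Integration of the Codazzi equation in the case B < 0: let B < 0 and c ≠ 0 be real constants, I ⊆ ℝ an open interval, and λ : I → ℝ a differentiable function satisfying λ'(u) + c·(λ(u)² + 4B) = 0 for all u ∈ I. If |λ(u₀)| < 2√(−B) for some u₀ ∈ I, then there exists a constant η ∈ ℝ such that λ(u) = 2√(−B)·tanh(η + 2c√(−B)·u) for all u ∈ I. -/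
noncomputable section

open Real Set Metric

lemma myTanh_eq (x : ℝ) : Real.tanh x = (exp x ^ 2 - 1) / (exp x ^ 2 + 1) := by
  have hE : (0:ℝ) < exp x := exp_pos x
  rw [tanh_eq_sinh_div_cosh, Real.sinh_eq, Real.cosh_eq, Real.exp_neg]
  rw [div_eq_div_iff (by positivity) (by positivity)]
  field_simp

lemma myTanh_abs_lt (x : ℝ) : |Real.tanh x| < 1 := by
  have hE : (0:ℝ) < exp x := exp_pos x
  rw [myTanh_eq, abs_div, abs_of_pos (by positivity : (0:ℝ) < exp x ^ 2 + 1),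
    div_lt_one (by positivity)]
  rw [abs_lt]; constructor <;> nlinarith

lemma myTanh_hasDeriv (x : ℝ) : HasDerivAt Real.tanh (1 - Real.tanh x ^ 2) x := by
  have h := (Real.hasDerivAt_sinh x).div (Real.hasDerivAt_cosh x) (ne_of_gt (cosh_pos x))
  have heq : (Real.sinh / Real.cosh) = Real.tanh := by
    funext y; rw [Pi.div_apply, tanh_eq_sinh_div_cosh]
  rw [heq] at h
  refine h.congr_deriv ?_
  have h1 := Real.cosh_sq_sub_sinh_sq x
  have h2 := ne_of_gt (cosh_pos x)
  rw [tanh_eq_sinh_div_cosh]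
  field_simp

lemma myTanh_surj {y : ℝ} (hy : |y| < 1) :
    Real.tanh (Real.log ((1+y)/(1-y)) / 2) = y := by
  have h1 : 0 < 1 + y := by cases abs_lt.1 hy; linarith
  have h2 : 0 < 1 - y := by cases abs_lt.1 hy; linarith
  have hE : exp (Real.log ((1+y)/(1-y)) / 2) ^ 2 = (1+y)/(1-y) := by
    rw [sq, ← Real.exp_add]
    have : Real.log ((1+y)/(1-y)) / 2 + Real.log ((1+y)/(1-y)) / 2
        = Real.log ((1+y)/(1-y)) := by ring
    rw [this, Real.exp_log (by positivity)]
  rw [myTanh_eq, hE]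
  rw [div_eq_iff (by positivity)]
  field_simp
  ring

theorem codazzi_integration_B_neg (B c : ℝ) (hB : B < 0) (hc : c ≠ 0) (I : Set ℝ)
    (hIopen : IsOpen I) (hIconn : I.OrdConnected)
    (lam : ℝ → ℝ)
    (hode : ∀ u ∈ I, HasDerivAt lam (-(c * (lam u ^ 2 + 4 * B))) u)
    (u₀ : ℝ) (hu₀ : u₀ ∈ I) (hlam₀ : |lam u₀| < 2 * Real.sqrt (-B)) :
    ∃ η : ℝ, ∀ u ∈ I,
      lam u = 2 * Real.sqrt (-B) * Real.tanh (η + 2 * c * Real.sqrt (-B) * u) := by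
  have hBpos : (0:ℝ) < -B := by linarith
  set a : ℝ := 2 * Real.sqrt (-B) with ha_def
  have ha : 0 < a := by
    have := Real.sqrt_pos.2 hBpos
    rw [ha_def]; linarith
  have ha2 : a ^ 2 = -(4 * B) := by
    rw [ha_def, mul_pow, Real.sq_sqrt hBpos.le]; ring
  set η : ℝ := Real.log ((1 + lam u₀ / a) / (1 - lam u₀ / a)) / 2 - c * a * u₀ with hη_def
  refine ⟨η, ?_⟩
  set g : ℝ → ℝ := fun u => a * Real.tanh (η + c * a * u) with hg_def
  -- initial value
  have habs : |lam u₀ / a| < 1 := by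
    rw [abs_div, abs_of_pos ha]; exact (div_lt_one ha).2 hlam₀
  have hg0 : g u₀ = lam u₀ := by
    have harg : η + c * a * u₀
        = Real.log ((1 + lam u₀ / a) / (1 - lam u₀ / a)) / 2 := by
      rw [hη_def]; ring
    simp only [hg_def]
    rw [harg, myTanh_surj habs]
    field_simp
  -- derivative of g
  have hgd : ∀ u, HasDerivAt g (-(c * (g u ^ 2 + 4 * B))) u := by
    intro u
    have h1 : HasDerivAt (fun u : ℝ => η + c * a * u) (c * a) u := by
      simpa using ((hasDerivAt_id u).const_mul (c * a)).const_add η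
    have h2 := ((myTanh_hasDeriv (η + c * a * u)).comp u h1).const_mul a
    refine HasDerivAt.congr_deriv (f := g) h2 (Eq.symm ?_)
    simp only [hg_def]
    linear_combination (-c) * ha2
  have hgb : ∀ u, |g u| ≤ a := by
    intro u
    simp only [hg_def]
    rw [abs_mul, abs_of_pos ha]
    nlinarith [myTanh_abs_lt (η + c * a * u), abs_nonneg (Real.tanh (η + c * a * u))]
  have hlc : ∀ u ∈ I, ContinuousAt lam u := fun u hu => (hode u hu).continuousAt
  -- key uniqueness claim
  have key : ∀ u ∈ I, lam u = g u := by
    intro u hu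
    rcases le_total u₀ u with hle | hle
    · have hsub : Icc u₀ u ⊆ I := hIconn.out hu₀ hu
      obtain ⟨R, hR⟩ := isCompact_Icc.exists_bound_of_continuousOn
        (fun t ht => (hlc t (hsub ht)).continuousWithinAt)
      set M : ℝ := max R a with hM_def
      have hMa : a ≤ M := le_max_right _ _
      have hM0 : 0 ≤ M := ha.le.trans hMa
      set K : NNReal := (2 * |c| * M).toNNReal with hK_def
      have hKc : (K : ℝ) = 2 * |c| * M := Real.coe_toNNReal _ (by positivity)
      have hv : ∀ t : ℝ, LipschitzOnWith K (fun y : ℝ => -(c * (y ^ 2 + 4 * B)))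
          (closedBall (0:ℝ) M) := by
        intro t
        apply LipschitzOnWith.of_dist_le_mul
        intro x hx y hy
        rw [mem_closedBall, Real.dist_eq, sub_zero] at hx hy
        rw [Real.dist_eq, Real.dist_eq, hKc]
        have hxy : -(c * (x ^ 2 + 4 * B)) - -(c * (y ^ 2 + 4 * B))
            = -c * (x + y) * (x - y) := by ring
        rw [hxy, abs_mul, abs_mul, abs_neg]
        have h1 : |x + y| ≤ 2 * M := by
          calc |x + y| ≤ |x| + |y| := abs_add_le _ _
          _ ≤ 2 * M := by linarith
        have h2 : (0:ℝ) ≤ |x - y| := abs_nonneg _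
        calc |c| * |x + y| * |x - y| ≤ |c| * (2 * M) * |x - y| := by
              apply mul_le_mul_of_nonneg_right _ h2
              exact mul_le_mul_of_nonneg_left h1 (abs_nonneg c)
          _ = 2 * |c| * M * |x - y| := by ring
      have heqon := ODE_solution_unique_of_mem_Icc_right (fun t _ => hv t)
        (v := fun _ y => -(c * (y ^ 2 + 4 * B))) (s := fun _ => closedBall (0:ℝ) M)
        (f := lam) (g := g)
        (ContinuousOn.mono (fun t ht => (hlc t (hsub ht)).continuousWithinAt)
          (subset_refl _))
        (fun t ht => (hode t (hsub (Ico_subset_Icc_self ht))).hasDerivWithinAt)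
        (fun t ht => by
          rw [mem_closedBall, Real.dist_eq, sub_zero]
          exact (le_max_left R a).trans' (hR t (Ico_subset_Icc_self ht)))
        (fun t ht => ((hgd t).continuousAt.continuousWithinAt))
        (fun t ht => (hgd t).hasDerivWithinAt)
        (fun t ht => by
          rw [mem_closedBall, Real.dist_eq, sub_zero]
          exact (hgb t).trans hMa)
        hg0.symm
      exact heqon ⟨hle, le_refl u⟩
    · have hsub : Icc u u₀ ⊆ I := hIconn.out hu hu₀
      obtain ⟨R, hR⟩ := isCompact_Icc.exists_bound_of_continuousOn
        (fun t ht => (hlc t (hsub ht)).continuousWithinAt)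
      set M : ℝ := max R a with hM_def
      have hMa : a ≤ M := le_max_right _ _
      have hM0 : 0 ≤ M := ha.le.trans hMa
      set K : NNReal := (2 * |c| * M).toNNReal with hK_def
      have hKc : (K : ℝ) = 2 * |c| * M := Real.coe_toNNReal _ (by positivity)
      have hv : ∀ t : ℝ, LipschitzOnWith K (fun y : ℝ => -(c * (y ^ 2 + 4 * B)))
          (closedBall (0:ℝ) M) := by
        intro t
        apply LipschitzOnWith.of_dist_le_mul
        intro x hx y hy
        rw [mem_closedBall, Real.dist_eq, sub_zero] at hx hy
        rw [Real.dist_eq, Real.dist_eq, hKc]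
        have hxy : -(c * (x ^ 2 + 4 * B)) - -(c * (y ^ 2 + 4 * B))
            = -c * (x + y) * (x - y) := by ring
        rw [hxy, abs_mul, abs_mul, abs_neg]
        have h1 : |x + y| ≤ 2 * M := by
          calc |x + y| ≤ |x| + |y| := abs_add_le _ _
          _ ≤ 2 * M := by linarith
        have h2 : (0:ℝ) ≤ |x - y| := abs_nonneg _
        calc |c| * |x + y| * |x - y| ≤ |c| * (2 * M) * |x - y| := by
              apply mul_le_mul_of_nonneg_right _ h2
              exact mul_le_mul_of_nonneg_left h1 (abs_nonneg c)
          _ = 2 * |c| * M * |x - y| := by ring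
      have heqon := ODE_solution_unique_of_mem_Icc_left (fun t _ => hv t)
        (v := fun _ y => -(c * (y ^ 2 + 4 * B))) (s := fun _ => closedBall (0:ℝ) M)
        (f := lam) (g := g)
        (ContinuousOn.mono (fun t ht => (hlc t (hsub ht)).continuousWithinAt)
          (subset_refl _))
        (fun t ht => (hode t (hsub (Ioc_subset_Icc_self ht))).hasDerivWithinAt)
        (fun t ht => by
          rw [mem_closedBall, Real.dist_eq, sub_zero]
          exact (le_max_left R a).trans' (hR t (Ioc_subset_Icc_self ht)))
        (fun t ht => ((hgd t).continuousAt.continuousWithinAt))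
        (fun t ht => (hgd t).hasDerivWithinAt)
        (fun t ht => by
          rw [mem_closedBall, Real.dist_eq, sub_zero]
          exact (hgb t).trans hMa)
        hg0.symm
      exact heqon ⟨le_refl u, hle⟩
  -- conclude
  intro u hu
  have harg : η + 2 * c * Real.sqrt (-B) * u = η + c * a * u := by
    rw [ha_def]; ring
  rw [harg, key u hu]
end
end

section
/- Solution of the linear system arising in the B > 0 classification: let τ > 0 and ϑ ∈ (0,π/2) with B = (τ²+1)cos²ϑ − 1 > 0, and set ã = −τ⁻²·sin²ϑ·B, b̃ = −2τ⁻¹·B, α₁ = (τ·√B·cos ϑ + B)/τ, α₂ = (τ·√B·cos ϑ − B)/τ, g₁₁ = (√B − τ·cos ϑ)/(2√B), g₃₃ = (√B + τ·cos ϑ)/(2√B), and I = ã·(b̃ − τ⁻¹·sin²ϑ). If real numbers x, y satisfy α₁·g₁₁·x − α₂·g₃₃·y = τ⁻¹·sin²ϑ and α₁³·g₁₁·x − α₂³·g₃₃·y = I, then x = y = −1. -/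
noncomputable section

set_option maxHeartbeats 1000000 in
theorem linear_system_solution_B_pos (τ ϑ B a b α₁ α₂ g₁₁ g₃₃ I x y : ℝ)
    (hτ : 0 < τ) (hϑ : ϑ ∈ Set.Ioo 0 (Real.pi / 2))
    (hB : B = (τ ^ 2 + 1) * Real.cos ϑ ^ 2 - 1) (hBpos : 0 < B)
    (ha : a = -(Real.sin ϑ ^ 2 * B) / τ ^ 2) (hb : b = -(2 * B) / τ)
    (hα₁ : α₁ = (τ * Real.sqrt B * Real.cos ϑ + B) / τ)
    (hα₂ : α₂ = (τ * Real.sqrt B * Real.cos ϑ - B) / τ)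
    (hg₁₁ : g₁₁ = (Real.sqrt B - τ * Real.cos ϑ) / (2 * Real.sqrt B))
    (hg₃₃ : g₃₃ = (Real.sqrt B + τ * Real.cos ϑ) / (2 * Real.sqrt B))
    (hI : I = a * (b - Real.sin ϑ ^ 2 / τ))
    (heq1 : α₁ * g₁₁ * x - α₂ * g₃₃ * y = Real.sin ϑ ^ 2 / τ)
    (heq2 : α₁ ^ 3 * g₁₁ * x - α₂ ^ 3 * g₃₃ * y = I) :
    x = -1 ∧ y = -1 := by
  obtain ⟨hϑ1, hϑ2⟩ := hϑ
  have hc : 0 < Real.cos ϑ := Real.cos_pos_of_mem_Ioo ⟨by linarith [Real.pi_pos], hϑ2⟩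
  have hsin : 0 < Real.sin ϑ := Real.sin_pos_of_pos_of_lt_pi hϑ1 (by linarith [Real.pi_pos])
  have hτ' : τ ≠ 0 := hτ.ne'
  have hsn : Real.sin ϑ ^ 2 ≠ 0 := by positivity
  set s := Real.sqrt B with hsdef
  have hs : s ^ 2 = B := Real.sq_sqrt hBpos.le
  have hspos : 0 < s := Real.sqrt_pos.2 hBpos
  have hpyth : Real.sin ϑ ^ 2 = τ ^ 2 * Real.cos ϑ ^ 2 - B := by
    have := Real.sin_sq_add_cos_sq ϑ; nlinarith
  set c := Real.cos ϑ with hcdef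
  have hA1 : α₁ * g₁₁ = -(Real.sin ϑ ^ 2) / (2 * τ) := by
    rw [hα₁, hg₁₁]
    field_simp
    linear_combination τ * c * hs + s * hpyth
  have hA2 : α₂ * g₃₃ = Real.sin ϑ ^ 2 / (2 * τ) := by
    rw [hα₂, hg₃₃]
    field_simp
    linear_combination τ * c * hs - s * hpyth
  have hA3 : α₁ ^ 2 = B * (τ * c + s) ^ 2 / τ ^ 2 := by
    rw [hα₁]
    field_simp
    linear_combination (τ ^ 2 * c ^ 2 - B) * hs
  have hA4 : α₂ ^ 2 = B * (τ * c - s) ^ 2 / τ ^ 2 := by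
    rw [hα₂]
    field_simp
    linear_combination (τ ^ 2 * c ^ 2 - B) * hs
  have hxy : x + y = -2 := by
    rw [hA1, hA2] at heq1
    have h : τ ^ 2 * (Real.sin ϑ ^ 2 * (x + y + 2)) = 0 := by
      field_simp at heq1
      linear_combination (-(τ ^ 2 * Real.sin ϑ ^ 2)) * heq1
    rcases mul_eq_zero.1 h with h' | h'
    · exact absurd h' (pow_ne_zero 2 hτ')
    rcases mul_eq_zero.1 h' with h'' | h''
    · exact absurd h'' hsn
    · linarith
  have h2 : (α₁ * g₁₁) * (α₁ ^ 2 * x) - (α₂ * g₃₃) * (α₂ ^ 2 * y) = I := by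
    linear_combination heq2
  rw [hA1, hA2, hA3, hA4, hI, ha, hb] at h2
  field_simp at h2
  have hK : τ ^ 7 * Real.sin ϑ ^ 2 * B ≠ 0 := by positivity
  have h3' : τ ^ 7 * Real.sin ϑ ^ 2 * B *
      (((τ * c + s) ^ 2 * x + (τ * c - s) ^ 2 * y) + 2 * (2 * B + Real.sin ϑ ^ 2)) = 0 := by
    linear_combination (-(τ ^ 7 * Real.sin ϑ ^ 2 * B)) * h2
  have h3 : ((τ * c + s) ^ 2 * x + (τ * c - s) ^ 2 * y) + 2 * (2 * B + Real.sin ϑ ^ 2) = 0 :=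
    (mul_eq_zero.1 h3').resolve_left hK
  have hkey : 4 * (τ * c * s) * (x + 1) = 0 := by
    linear_combination h3 - (τ * c - s) ^ 2 * hxy - 2 * hpyth + 2 * hs
  have hx : x = -1 := by
    have hne : (4 : ℝ) * (τ * c * s) ≠ 0 := by positivity
    have := (mul_eq_zero.1 hkey).resolve_left hne
    linarith
  exact ⟨hx, by linarith⟩
end
end
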